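/- Let Ω ⊂ ℝ² be a bounded Lipschitz domain, μ > 0, λ > 0, and let (u,p), (ũ,p̃) ∈ H¹_{Γ_D}(Ω)² × L²(Ω) solve the displacement-pressure elasticity system with data (f, g) and (P f, P g) respectively, where P and P^{Γ_N} are L²-orthogonal projections. Then 2μ‖ε(ũ - u)‖² + (1/λ)‖p̃ - p‖² = (P f - f, ũ - u - P(ũ - u)) + ⟨P^{Γ_N} g - g, ũ - u - P^{Γ_N}(ũ - u)⟩_{L²(Γ_N)}. -/
import Mathlib

open RealInnerProductSpace

/-- oscillation identity for the displacement-pressure system. Here `eps`,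
    `dv`, `j`, `γ` are the (linear) strain, divergence, L²-embedding and boundary trace
    operators, `P`, `PG` are L²-orthogonal projections (characterized by
    (Px - x, Py) = 0), and (u, p), (ũ, p̃) solve the weak formulation with data (f, g)
    and (Pf, PGg) respectively. Then
    2μ‖ε(ũ-u)‖² + (1/λ)‖p̃-p‖²
      = (Pf - f, j(ũ-u) - P j(ũ-u)) + (PGg - g, γ(ũ-u) - PG γ(ũ-u)). -/
theorem oscillation_identity
    {V W Q L G : Type*} [AddCommGroup V] [Module ℝ V]
    [NormedAddCommGroup W] [InnerProductSpace ℝ W]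
    [NormedAddCommGroup Q] [InnerProductSpace ℝ Q]
    [NormedAddCommGroup L] [InnerProductSpace ℝ L]
    [NormedAddCommGroup G] [InnerProductSpace ℝ G]
    (μ lam : ℝ) (hμ : 0 < μ) (hlam : 0 < lam)
    (eps : V →ₗ[ℝ] W) (dv : V →ₗ[ℝ] Q) (j : V →ₗ[ℝ] L) (γ : V →ₗ[ℝ] G)
    (P : L →ₗ[ℝ] L) (PG : G →ₗ[ℝ] G)
    (hP : ∀ x y : L, ⟪P x - x, P y⟫ = 0)
    (hPG : ∀ x y : G, ⟪PG x - x, PG y⟫ = 0)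
    (f : L) (g : G) (u ut : V) (p pt : Q)
    (h1 : ∀ v : V, 2 * μ * ⟪eps u, eps v⟫ + ⟪p, dv v⟫ = ⟪f, j v⟫ + ⟪g, γ v⟫)
    (h2 : ∀ q : Q, ⟪dv u, q⟫ - (1 / lam) * ⟪p, q⟫ = 0)
    (h1t : ∀ v : V, 2 * μ * ⟪eps ut, eps v⟫ + ⟪pt, dv v⟫
      = ⟪P f, j v⟫ + ⟪PG g, γ v⟫)
    (h2t : ∀ q : Q, ⟪dv ut, q⟫ - (1 / lam) * ⟪pt, q⟫ = 0) :
    2 * μ * ‖eps (ut - u)‖ ^ 2 + (1 / lam) * ‖pt - p‖ ^ 2 =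
      ⟪P f - f, j (ut - u) - P (j (ut - u))⟫ +
      ⟪PG g - g, γ (ut - u) - PG (γ (ut - u))⟫ := by
  have key : 2 * μ * ⟪eps (ut - u), eps (ut - u)⟫ + ⟪pt - p, dv (ut - u)⟫
      = ⟪P f - f, j (ut - u)⟫ + ⟪PG g - g, γ (ut - u)⟫ := by
    have a := h1 (ut - u); have b := h1t (ut - u)
    simp only [map_sub, inner_sub_left, inner_sub_right] at a b ⊢
    linarith
  have hdiv : ⟪pt - p, dv (ut - u)⟫ = (1 / lam) * ⟪pt - p, pt - p⟫ := by
    have a := h2 (pt - p); have b := h2t (pt - p)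
    rw [real_inner_comm]
    simp only [map_sub, inner_sub_left] at a b ⊢
    linarith
  have o1 : ⟪P f - f, P (j (ut - u))⟫ = 0 := hP f _
  have o2 : ⟪PG g - g, PG (γ (ut - u))⟫ = 0 := hPG g _
  rw [inner_sub_right, inner_sub_right, o1, o2,
    ← real_inner_self_eq_norm_sq, ← real_inner_self_eq_norm_sq]
  linarith
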